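/- Fix a prime p and j ≥ 1, and let u = M ⋆ P_0, v = M ⋆ P_j where M = (1,-1,0,0,...) and P_i(r) = p^{ir}. Then w = u ⋆ v is not logarithmically concave: w_1^2 - w_0 w_2 < 0. -/

import Mathlib

/-- Discrete convolution of two sequences. -/
def conv (u v : ℕ → ℝ) : ℕ → ℝ := fun r => ∑ j ∈ Finset.range (r + 1), u (r - j) * v j

/-- The sequence (1, -1, 0, 0, ...). -/
def M : ℕ → ℝ := fun r => if r = 0 then 1 else if r = 1 then -1 else 0

/-- The geometric sequence r ↦ p^{i r}. -/
def P (p i : ℕ) : ℕ → ℝ := fun r => (p : ℝ) ^ (i * r)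

theorem MP0_conv_MPj_not_log_concave (p j : ℕ) (hp : p.Prime) (hj : 1 ≤ j) :
    conv (conv M (P p 0)) (conv M (P p j)) 1 ^ 2 -
        conv (conv M (P p 0)) (conv M (P p j)) 0 *
          conv (conv M (P p 0)) (conv M (P p j)) 2 < 0 := by
  have hq : (1 : ℝ) < (p : ℝ) ^ j :=
    one_lt_pow₀ (by exact_mod_cast hp.one_lt) (by omega)
  simp only [conv, M, P, Finset.sum_range_succ, Finset.sum_range_zero]
  norm_num
  ring_nf
  nlinarith [hq, sq_nonneg ((p:ℝ)^j)]
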